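/- For b ≥ 2 and k ≥ 2 (with bk > 2 guaranteed), Σ_{n_1,…,n_k ≤ x} (n_1,…,n_k)_b = (ζ(bk−1)/ζ(bk)) x^k + O(x^{k−1}) as x → ∞, where (n_1,…,n_k)_b := max{d ≥ 1 : d^b | n_i for all i}, provided (b,k) ≠ (2,2); for b = 2, k = 2 the error term is O(x log x). -/

import Mathlib

open Finset ArithmeticFunction LSeries
open scoped LSeries.notation
open scoped ArithmeticFunction.zeta



noncomputable def ggcdk (b k : ℕ) (n : Fin k → ℕ) : ℕ :=
  sSup {d : ℕ | 0 < d ∧ ∀ i, d ^ b ∣ n i}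

lemma lcm_pow_dvd {a c m b : ℕ} (hb : 0 < b) (ha : a ^ b ∣ m) (hc : c ^ b ∣ m) :
    Nat.lcm a c ^ b ∣ m := by
  rcases eq_or_ne m 0 with rfl | hm
  · exact dvd_zero _
  have ha0 : a ≠ 0 := by rintro rfl; simp [zero_pow hb.ne', hm.symm] at ha; omega
  have hc0 : c ≠ 0 := by rintro rfl; simp [zero_pow hb.ne', hm.symm] at hc; omega
  have hl0 : Nat.lcm a c ≠ 0 := Nat.lcm_ne_zero ha0 hc0
  rw [← Nat.factorization_le_iff_dvd (pow_ne_zero _ hl0) hm]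
  rw [← Nat.factorization_le_iff_dvd (pow_ne_zero _ ha0) hm] at ha
  rw [← Nat.factorization_le_iff_dvd (pow_ne_zero _ hc0) hm] at hc
  intro p
  have := ha p
  have := hc p
  rw [Nat.factorization_pow] at *
  simp only [Finsupp.smul_apply, smul_eq_mul] at *
  rw [Nat.factorization_lcm ha0 hc0]
  simp only [Finsupp.sup_apply]
  rcases le_total (a.factorization p) (c.factorization p) with h | h
  · rw [max_eq_right h]; omega
  · rw [max_eq_left h]; omega

lemma ggcdk_spec (b k : ℕ) (hb : 0 < b) (hk : 0 < k) (n : Fin k → ℕ)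
    (hn : ∀ i, 0 < n i) :
    (0 < ggcdk b k n ∧ ∀ i, ggcdk b k n ^ b ∣ n i) ∧
    ∀ d, 0 < d → ((∀ i, d ^ b ∣ n i) ↔ d ∣ ggcdk b k n) := by
  set S : Set ℕ := {d : ℕ | 0 < d ∧ ∀ i, d ^ b ∣ n i} with hS
  have i0 : Fin k := ⟨0, hk⟩
  have hbdd : BddAbove S := by
    refine ⟨n i0, fun d hd => ?_⟩
    calc d ≤ d ^ b := Nat.le_self_pow hb.ne' d
    _ ≤ n i0 := Nat.le_of_dvd (hn i0) (hd.2 i0)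
  have h1 : (1 : ℕ) ∈ S := ⟨one_pos, fun i => by simp⟩
  have hmem : sSup S ∈ S := Nat.sSup_mem ⟨1, h1⟩ hbdd
  have hD : ggcdk b k n = sSup S := rfl
  refine ⟨⟨hmem.1, hmem.2⟩, fun d hd => ⟨fun hdvd => ?_, fun hdvd i => ?_⟩⟩
  · have hlcm : Nat.lcm d (sSup S) ∈ S := by
      refine ⟨Nat.pos_of_ne_zero (Nat.lcm_ne_zero hd.ne' hmem.1.ne'), fun i => ?_⟩
      exact lcm_pow_dvd hb (hdvd i) (hmem.2 i)
    have h1 : Nat.lcm d (sSup S) ≤ sSup S := le_csSup hbdd hlcm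
    have h2 : sSup S ≤ Nat.lcm d (sSup S) :=
      Nat.le_of_dvd hlcm.1 (Nat.dvd_lcm_right _ _)
    have : Nat.lcm d (sSup S) = sSup S := le_antisymm h1 h2
    rw [hD, ← this]
    exact Nat.dvd_lcm_left _ _
  · exact dvd_trans (pow_dvd_pow_of_dvd hdvd b) (hmem.2 i)

lemma ggcdk_eq_sum (b k N : ℕ) (hb : 0 < b) (hk : 0 < k) (n : Fin k → ℕ)
    (hn : ∀ i, n i ∈ Finset.Icc 1 N) :
    ggcdk b k n = ∑ d ∈ Finset.Icc 1 N, if ∀ i, d ^ b ∣ n i then Nat.totient d else 0 := by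
  have hn' : ∀ i, 0 < n i := fun i => (Finset.mem_Icc.mp (hn i)).1
  obtain ⟨⟨hD0, hDd⟩, hiff⟩ := ggcdk_spec b k hb hk n hn'
  set D := ggcdk b k n with hD
  have i0 : Fin k := ⟨0, hk⟩
  have hDN : D ≤ N := by
    calc D ≤ D ^ b := Nat.le_self_pow hb.ne' D
    _ ≤ n i0 := Nat.le_of_dvd (hn' i0) (hDd i0)
    _ ≤ N := (Finset.mem_Icc.mp (hn i0)).2
  rw [← Finset.sum_filter]
  have : {d ∈ Finset.Icc 1 N | ∀ i, d ^ b ∣ n i} = D.divisors := by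
    ext d
    simp only [Finset.mem_filter, Finset.mem_Icc, Nat.mem_divisors]
    constructor
    · rintro ⟨⟨h1, h2⟩, h3⟩
      exact ⟨(hiff d h1).mp h3, hD0.ne'⟩
    · rintro ⟨h1, -⟩
      have hd0 : 0 < d := Nat.pos_of_dvd_of_pos h1 hD0
      exact ⟨⟨hd0, le_trans (Nat.le_of_dvd hD0 h1) hDN⟩, (hiff d hd0).mpr h1⟩
  rw [this, Nat.sum_totient]

lemma sum_ggcdk_eq (b k N : ℕ) (hb : 0 < b) (hk : 0 < k) :
    ∑ n ∈ Fintype.piFinset (fun _ : Fin k => Finset.Icc 1 N), ggcdk b k n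
      = ∑ d ∈ Finset.Icc 1 N, Nat.totient d * (N / d ^ b) ^ k := by
  have : ∀ n ∈ Fintype.piFinset (fun _ : Fin k => Finset.Icc 1 N),
      ggcdk b k n = ∑ d ∈ Finset.Icc 1 N, if ∀ i, d ^ b ∣ n i then Nat.totient d else 0 := by
    intro n hn
    exact ggcdk_eq_sum b k N hb hk n (fun i => Fintype.mem_piFinset.mp hn i)
  rw [Finset.sum_congr rfl this, Finset.sum_comm]
  refine Finset.sum_congr rfl fun d _ => ?_
  rw [← Finset.sum_filter, Finset.sum_const, smul_eq_mul, mul_comm]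
  congr 1
  have hset : {x ∈ Fintype.piFinset (fun _ : Fin k => Finset.Icc 1 N) | ∀ i, d ^ b ∣ x i}
      = Fintype.piFinset (fun _ : Fin k => {m ∈ Finset.Icc 1 N | d ^ b ∣ m}) := by
    ext x
    simp only [Finset.mem_filter, Fintype.mem_piFinset, forall_and]
  rw [hset, Fintype.card_piFinset_const]
  congr 1
  have : Finset.Icc 1 N = Finset.Ioc 0 N := by
    rw [← Finset.Icc_add_one_left_eq_Ioc, zero_add]
  rw [this, Nat.Ioc_filter_dvd_card_eq_div]

lemma totient_lseries (m : ℕ) (hm : 3 ≤ m) :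
    riemannZeta ((m : ℂ) - 1) / riemannZeta (m : ℂ)
      = ∑' d : ℕ, (Nat.totient d : ℂ) / (d : ℂ) ^ m := by
  set s : ℂ := (m : ℂ) with hs
  have hm3 : (3 : ℝ) ≤ (m : ℝ) := by exact_mod_cast hm
  have hsre2 : 2 < s.re := by rw [hs, Complex.natCast_re]; linarith
  have hsre : 1 < s.re := by linarith
  have hs1re : 1 < (s - 1).re := by
    rw [hs, Complex.sub_re, Complex.natCast_re, Complex.one_re]; linarith
  set f : ℕ → ℂ := fun n => (Nat.totient n : ℂ) with hf
  have hfs : LSeriesSummable f s := by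
    refine LSeriesSummable_of_le_const_mul_rpow hsre2 ⟨1, fun n hn => ?_⟩
    simp only [hf, Complex.norm_natCast, one_mul]
    norm_num
    exact Nat.totient_le n
  have hζs : LSeriesSummable ↗(ζ : ArithmeticFunction ℂ) s :=
    LSeriesSummable_zeta_iff.mpr hsre
  have hconv : f ⍟ ↗(ζ : ArithmeticFunction ℂ) = fun n : ℕ => (n : ℂ) := by
    funext n
    rcases Nat.eq_zero_or_pos n with rfl | hn
    · simp [convolution_def]
    · rw [convolution_def]
      simp only
      have h1 : ∀ p ∈ n.divisorsAntidiagonal,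
          f p.1 * ((ζ : ArithmeticFunction ℂ) p.2 : ℂ) = (Nat.totient p.1 : ℂ) := by
        intro p hp
        obtain ⟨hpd, hn0⟩ := Nat.mem_divisorsAntidiagonal.mp hp
        have hp2 : p.2 ≠ 0 := by rintro h; rw [h, mul_zero] at hpd; exact hn0 hpd.symm
        simp [hf, natCoe_apply, zeta_apply, hp2]
      rw [Finset.sum_congr rfl h1,
        Nat.sum_divisorsAntidiagonal (fun x _ => (Nat.totient x : ℂ))]
      norm_cast
      exact Nat.sum_totient n
  have hmul := LSeries_convolution' hfs hζs
  have hzeta : LSeries ↗(ζ : ArithmeticFunction ℂ) s = riemannZeta s :=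
    LSeries_zeta_eq_riemannZeta hsre
  have hid : LSeries (fun n : ℕ => (n : ℂ)) s = riemannZeta (s - 1) := by
    rw [zeta_eq_tsum_one_div_nat_cpow hs1re, LSeries]
    congr 1
    funext n
    rcases Nat.eq_zero_or_pos n with rfl | hn
    · rw [LSeries.term_zero]
      rw [Nat.cast_zero, Complex.zero_cpow (by
        intro h
        have := congrArg Complex.re h
        rw [Complex.sub_re, Complex.natCast_re, Complex.one_re, Complex.zero_re] at this
        linarith), div_zero]
    · rw [LSeries.term_of_ne_zero hn.ne']
      have hn0 : (n : ℂ) ≠ 0 := Nat.cast_ne_zero.mpr hn.ne'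
      rw [Complex.cpow_sub _ _ hn0, Complex.cpow_one]
      rw [div_div_eq_mul_div, one_mul]
  have hzne : riemannZeta s ≠ 0 := riemannZeta_ne_zero_of_one_lt_re hsre
  have key : LSeries f s * riemannZeta s = riemannZeta (s - 1) := by
    rw [← hzeta, ← hmul, hconv, hid]
  have hLf : LSeries f s = riemannZeta (s - 1) / riemannZeta s := by
    field_simp [hzne] at key ⊢
    linear_combination key
  rw [← hLf, LSeries]
  congr 1
  funext n
  rcases Nat.eq_zero_or_pos n with rfl | hn
  · rw [LSeries.term_zero]; simp
  · rw [LSeries.term_of_ne_zero hn.ne', hs, Complex.cpow_natCast]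


lemma pow_sub_pow_le' {a c : ℝ} (h0 : 0 ≤ a) (hac : a ≤ c) (n : ℕ) :
    c ^ n - a ^ n ≤ n * c ^ (n - 1) * (c - a) := by
  induction n with
  | zero => simp
  | succ n ih =>
    have hc : 0 ≤ c := h0.trans hac
    rcases Nat.eq_zero_or_pos n with rfl | hn
    · simp
    have hcc : c * c ^ (n - 1) = c ^ n := by
      rw [← pow_succ']; congr 1; omega
    have han : a ^ n ≤ c ^ n := pow_le_pow_left₀ h0 hac n
    have h1 : c ^ (n + 1) - a ^ (n + 1) = c * (c ^ n - a ^ n) + (c - a) * a ^ n := by ring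
    have h2 : c * (c ^ n - a ^ n) ≤ c * (n * c ^ (n - 1) * (c - a)) :=
      mul_le_mul_of_nonneg_left ih hc
    have h3 : (c - a) * a ^ n ≤ (c - a) * c ^ n :=
      mul_le_mul_of_nonneg_left han (by linarith)
    have h4 : c * (n * c ^ (n - 1) * (c - a)) = n * c ^ n * (c - a) := by
      rw [← hcc]; ring
    push_cast
    calc c ^ (n + 1) - a ^ (n + 1) ≤ n * c ^ n * (c - a) + (c - a) * c ^ n := by
          rw [h1, ← h4]; exact add_le_add h2 h3
    _ = (n + 1) * c ^ (n + 1 - 1) * (c - a) := by simp; ring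

-- tail bound: if N < d^b (in particular when ⌊N/d^b⌋ = 0 or d > N)
lemma tail_bound (b k : ℕ) (hb : 3 ≤ b) (hk : 2 ≤ k) {x : ℝ} (hx : 2 ≤ x)
    {d : ℕ} (hd : 1 ≤ d) (hdb : (⌊x⌋₊ : ℝ) < (d : ℝ) ^ b) :
    (Nat.totient d : ℝ) * x ^ k / (d : ℝ) ^ (b * k) ≤ 2 * x ^ (k - 1) / (d : ℝ) ^ 2 := by
  have hd1 : (1 : ℝ) ≤ (d : ℝ) := by exact_mod_cast hd
  have hd0 : (0 : ℝ) < (d : ℝ) := by linarith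
  have hx0 : (0 : ℝ) < x := by linarith
  have hNx : x < (⌊x⌋₊ : ℝ) + 1 := Nat.lt_floor_add_one x
  have hN1 : (1 : ℝ) ≤ (⌊x⌋₊ : ℝ) := by
    have : (1 : ℕ) ≤ ⌊x⌋₊ := Nat.le_floor (by norm_num; linarith)
    exact_mod_cast this
  have hx2N : x < 2 * (d : ℝ) ^ b := by nlinarith
  have hφ : (Nat.totient d : ℝ) ≤ (d : ℝ) := by exact_mod_cast Nat.totient_le d
  have hpow : (d : ℝ) ^ (b + 3) ≤ (d : ℝ) ^ (b * k) :=
    pow_le_pow_right₀ hd1 (by nlinarith)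
  have hxk : x ^ k = x ^ (k - 1) * x := by
    rw [← pow_succ]; congr 1; omega
  rw [div_le_div_iff₀ (by positivity) (by positivity)]
  have key : (d : ℝ) * x * (d : ℝ) ^ 2 ≤ 2 * (d : ℝ) ^ (b * k) := by
    calc (d : ℝ) * x * (d : ℝ) ^ 2 ≤ (d : ℝ) * (2 * (d : ℝ) ^ b) * (d : ℝ) ^ 2 := by
          have : (0 : ℝ) < (d:ℝ) * (d:ℝ)^2 := by positivity
          nlinarith
    _ = 2 * (d : ℝ) ^ (b + 3) := by ring
    _ ≤ 2 * (d : ℝ) ^ (b * k) := by linarith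
  calc (Nat.totient d : ℝ) * x ^ k * (d : ℝ) ^ 2
      ≤ (d : ℝ) * x ^ k * (d : ℝ) ^ 2 := by
        have : (0:ℝ) ≤ x ^ k * (d:ℝ)^2 := by positivity
        nlinarith
  _ = x ^ (k - 1) * ((d : ℝ) * x * (d : ℝ) ^ 2) := by rw [hxk]; ring
  _ ≤ x ^ (k - 1) * (2 * (d : ℝ) ^ (b * k)) := by
        have : (0:ℝ) ≤ x ^ (k-1) := by positivity
        nlinarith
  _ = 2 * x ^ (k - 1) * (d : ℝ) ^ (b * k) := by ring

lemma term_bound (b k : ℕ) (hb : 3 ≤ b) (hk : 2 ≤ k) {x : ℝ} (hx : 2 ≤ x)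
    {d : ℕ} (hd : 1 ≤ d) :
    |(Nat.totient d : ℝ) * ((⌊x⌋₊ / d ^ b : ℕ) : ℝ) ^ k
        - (Nat.totient d : ℝ) * x ^ k / (d : ℝ) ^ (b * k)|
      ≤ (2 * k + 2) * x ^ (k - 1) / (d : ℝ) ^ 2 := by
  have hd1 : (1 : ℝ) ≤ (d : ℝ) := by exact_mod_cast hd
  have hx0 : (0 : ℝ) < x := by linarith
  have hk1 : 1 ≤ k := by omega
  have hdb1 : (1 : ℝ) ≤ (d : ℝ) ^ b := one_le_pow₀ hd1
  have hdb0 : (0 : ℝ) < (d : ℝ) ^ b := by linarith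
  have hterm_nonneg : 0 ≤ (Nat.totient d : ℝ) * x ^ k / (d : ℝ) ^ (b * k) := by positivity
  have hbound2 : (2 : ℝ) * x ^ (k - 1) / (d : ℝ) ^ 2
      ≤ (2 * k + 2) * x ^ (k - 1) / (d : ℝ) ^ 2 := by
    apply div_le_div_of_nonneg_right ?_ (by positivity) |>.trans_eq rfl
    have : (0:ℝ) ≤ x ^ (k-1) := by positivity
    have hk' : (1:ℝ) ≤ (k:ℝ) := by exact_mod_cast hk1
    nlinarith
  rcases lt_or_ge (⌊x⌋₊ : ℕ) (d ^ b) with hcase | hcase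
  · -- N < d^b : floor quotient is zero
    have h0 : ⌊x⌋₊ / d ^ b = 0 := Nat.div_eq_of_lt hcase
    rw [h0]
    have hcast : ((⌊x⌋₊ : ℕ) : ℝ) < (d : ℝ) ^ b := by exact_mod_cast hcase
    rw [Nat.cast_zero, zero_pow (by omega : k ≠ 0), mul_zero, zero_sub, abs_neg,
      abs_of_nonneg hterm_nonneg]
    exact (tail_bound b k hb hk hx hd hcast).trans hbound2
  · -- d^b ≤ N
    set N := ⌊x⌋₊ with hN
    set F : ℕ := N / d ^ b with hF
    set y : ℝ := x / (d : ℝ) ^ b with hy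
    have hNx : (N : ℝ) ≤ x := Nat.floor_le (le_of_lt hx0)
    have hxN : x < (N : ℝ) + 1 := Nat.lt_floor_add_one x
    have hdbcast : ((d ^ b : ℕ) : ℝ) = (d : ℝ) ^ b := by push_cast; ring
    have hFy : (F : ℝ) ≤ y := by
      calc (F : ℝ) ≤ (N : ℝ) / ((d ^ b : ℕ) : ℝ) := Nat.cast_div_le
      _ = (N : ℝ) / (d : ℝ) ^ b := by rw [hdbcast]
      _ ≤ y := by rw [hy]; gcongr
    have hF0 : (0 : ℝ) ≤ (F : ℝ) := Nat.cast_nonneg F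
    have hmod : N < d ^ b * F + d ^ b := by
      have h1 : d ^ b * F + N % d ^ b = N := by rw [hF]; exact Nat.div_add_mod N (d ^ b)
      have h2 := Nat.mod_lt N (show 0 < d ^ b by positivity)
      omega
    have hyF : y - (F : ℝ) ≤ 2 := by
      have hmod' : (N : ℝ) < (d : ℝ) ^ b * (F : ℝ) + (d : ℝ) ^ b := by
        exact_mod_cast hmod
      rw [hy, sub_le_iff_le_add, div_le_iff₀ hdb0]
      nlinarith
    have hpowdiff : y ^ k - (F : ℝ) ^ k ≤ (k : ℝ) * y ^ (k - 1) * 2 := by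
      calc y ^ k - (F : ℝ) ^ k ≤ (k : ℝ) * y ^ (k - 1) * (y - F) :=
            pow_sub_pow_le' hF0 hFy k
      _ ≤ (k : ℝ) * y ^ (k - 1) * 2 := by
            have : (0:ℝ) ≤ (k : ℝ) * y ^ (k - 1) := by positivity
            nlinarith
    have hrw : (Nat.totient d : ℝ) * x ^ k / (d : ℝ) ^ (b * k)
        = (Nat.totient d : ℝ) * y ^ k := by
      rw [hy, div_pow, pow_mul]; ring
    rw [hrw, ← mul_sub, abs_mul, Nat.abs_cast, abs_of_nonpos (by nlinarith [pow_le_pow_left₀ hF0 hFy k] : ((F:ℝ)^k - y^k) ≤ 0)]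
    have hφ : (Nat.totient d : ℝ) ≤ (d : ℝ) := by exact_mod_cast Nat.totient_le d
    have hykF : 0 ≤ y ^ k - (F : ℝ) ^ k := by
      nlinarith [pow_le_pow_left₀ hF0 hFy k]
    have hyk1 : y ^ (k - 1) = x ^ (k - 1) / ((d : ℝ) ^ b) ^ (k - 1) := by
      rw [hy, div_pow]
    have hb3 : 3 ≤ b * (k - 1) := by
      calc 3 = 3 * 1 := by ring
      _ ≤ b * (k - 1) := Nat.mul_le_mul hb (by omega)
    have hd3 : (d : ℝ) ^ 3 ≤ (d : ℝ) ^ (b * (k - 1)) := pow_le_pow_right₀ hd1 hb3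
    have hfrac : (d : ℝ) / ((d : ℝ) ^ b) ^ (k - 1) ≤ 1 / (d : ℝ) ^ 2 := by
      rw [div_le_div_iff₀ (by positivity) (by positivity), ← pow_mul, one_mul]
      calc (d : ℝ) * (d : ℝ) ^ 2 = (d : ℝ) ^ 3 := by ring
      _ ≤ (d : ℝ) ^ (b * (k - 1)) := hd3
    have hxk1 : (0 : ℝ) ≤ x ^ (k - 1) := by positivity
    calc (Nat.totient d : ℝ) * -((F : ℝ) ^ k - y ^ k)
        = (Nat.totient d : ℝ) * (y ^ k - (F : ℝ) ^ k) := by ring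
    _ ≤ (d : ℝ) * ((k : ℝ) * y ^ (k - 1) * 2) := by
        apply mul_le_mul hφ hpowdiff hykF (by linarith)
    _ = 2 * (k : ℝ) * x ^ (k - 1) * ((d : ℝ) / ((d : ℝ) ^ b) ^ (k - 1)) := by
        rw [hyk1]; ring
    _ ≤ 2 * (k : ℝ) * x ^ (k - 1) * (1 / (d : ℝ) ^ 2) := by
        apply mul_le_mul_of_nonneg_left hfrac (by positivity)
    _ ≤ (2 * k + 2) * x ^ (k - 1) / (d : ℝ) ^ 2 := by
        rw [mul_one_div]
        gcongr
        linarith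

lemma analytic_est (b k : ℕ) (hb : 3 ≤ b) (hk : 2 ≤ k) :
    ∃ C, ∀ x : ℝ, 2 ≤ x →
      |(∑ d ∈ Finset.Icc 1 ⌊x⌋₊, (Nat.totient d : ℝ) * ((⌊x⌋₊ / d ^ b : ℕ) : ℝ) ^ k)
        - (∑' d : ℕ, (Nat.totient d : ℝ) / (d : ℝ) ^ (b * k)) * x ^ k|
        ≤ C * x ^ (k - 1) := by
  have hsum2 : Summable (fun d : ℕ => 1 / (d : ℝ) ^ 2) :=
    Real.summable_one_div_nat_pow.mpr one_lt_two
  set K : ℝ := ∑' d : ℕ, 1 / (d : ℝ) ^ 2 with hK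
  refine ⟨(2 * k + 2) * K + 2 * K, fun x hx => ?_⟩
  have hx0 : (0 : ℝ) < x := by linarith
  have hxk1 : (0 : ℝ) ≤ x ^ (k - 1) := by positivity
  set N := ⌊x⌋₊ with hN
  set t : ℕ → ℝ := fun d => (Nat.totient d : ℝ) * x ^ k / (d : ℝ) ^ (b * k) with ht
  -- summability of t
  have hbk : 1 < b * k - 1 := by have := Nat.mul_le_mul hb hk; omega
  have hsum1 : Summable (fun d : ℕ => 1 / (d : ℝ) ^ (b * k - 1)) :=
    Real.summable_one_div_nat_pow.mpr hbk
  have hts : Summable t := by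
    apply Summable.of_nonneg_of_le (fun d => by positivity)
      (fun d => ?_) (hsum1.mul_left (x ^ k))
    rcases Nat.eq_zero_or_pos d with rfl | hd
    · simp [ht, zero_pow (by positivity : b * k ≠ 0), zero_pow (by omega : b * k - 1 ≠ 0)]
    · have hd1 : (1 : ℝ) ≤ (d : ℝ) := by exact_mod_cast hd
      have hφ : (Nat.totient d : ℝ) ≤ (d : ℝ) := by exact_mod_cast Nat.totient_le d
      rw [ht]
      simp only
      rw [div_le_iff₀ (by positivity), mul_one_div, div_mul_eq_mul_div,
        le_div_iff₀ (by positivity)]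
      have : (d : ℝ) ^ (b * k) = (d : ℝ) ^ (b * k - 1) * (d : ℝ) := by
        rw [← pow_succ]; congr 1; omega
      rw [this]
      have h1 : (0 : ℝ) ≤ x ^ k * (d:ℝ) ^ (b * k - 1) := by positivity
      nlinarith
  -- rewrite main term
  have hmain : (∑' d : ℕ, (Nat.totient d : ℝ) / (d : ℝ) ^ (b * k)) * x ^ k = ∑' d, t d := by
    rw [← tsum_mul_right]
    congr 1; funext d; rw [ht]; ring
  have hsplit : (∑ d ∈ Finset.Icc 1 N, t d) + (∑' d : {d : ℕ // d ∉ Finset.Icc 1 N}, t d)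
      = ∑' d, t d := Summable.sum_add_tsum_compl hts
  rw [hmain, ← hsplit]
  have habs : |(∑ d ∈ Finset.Icc 1 N, (Nat.totient d : ℝ) * ((N / d ^ b : ℕ) : ℝ) ^ k)
      - ((∑ d ∈ Finset.Icc 1 N, t d) + (∑' d : {d : ℕ // d ∉ Finset.Icc 1 N}, t d))|
      ≤ (∑ d ∈ Finset.Icc 1 N, |(Nat.totient d : ℝ) * ((N / d ^ b : ℕ) : ℝ) ^ k - t d|)
        + |∑' d : {d : ℕ // d ∉ Finset.Icc 1 N}, t d| := by
    rw [sub_add_eq_sub_sub, ← Finset.sum_sub_distrib]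
    exact (abs_sub _ _).trans (add_le_add_left (Finset.abs_sum_le_sum_abs _ _) _)
  refine habs.trans ?_
  have hpart1 : (∑ d ∈ Finset.Icc 1 N, |(Nat.totient d : ℝ) * ((N / d ^ b : ℕ) : ℝ) ^ k - t d|)
      ≤ (2 * k + 2) * x ^ (k - 1) * K := by
    calc (∑ d ∈ Finset.Icc 1 N, |(Nat.totient d : ℝ) * ((N / d ^ b : ℕ) : ℝ) ^ k - t d|)
        ≤ ∑ d ∈ Finset.Icc 1 N, (2 * k + 2) * x ^ (k - 1) * (1 / (d : ℝ) ^ 2) := by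
          apply Finset.sum_le_sum
          intro d hd
          rw [mul_one_div]
          exact term_bound b k hb hk hx (Finset.mem_Icc.mp hd).1
    _ = (2 * k + 2) * x ^ (k - 1) * ∑ d ∈ Finset.Icc 1 N, (1 / (d : ℝ) ^ 2) := by
          rw [Finset.mul_sum]
    _ ≤ (2 * k + 2) * x ^ (k - 1) * K := by
          apply mul_le_mul_of_nonneg_left _ (by positivity)
          exact Summable.sum_le_tsum _ (fun d _ => by positivity) hsum2
  have hpart2 : |∑' d : {d : ℕ // d ∉ Finset.Icc 1 N}, t d| ≤ 2 * x ^ (k - 1) * K := by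
    have hb1 : ∀ d : {d : ℕ // d ∉ Finset.Icc 1 N}, ‖t d.1‖ ≤ 2 * x ^ (k - 1) * (1 / ((d.1 : ℝ)) ^ 2) := by
      rintro ⟨d, hd⟩
      rcases Nat.eq_zero_or_pos d with rfl | hd1
      · simp [ht, zero_pow (by positivity : b * k ≠ 0)]
      · have hdN : N < d := by
          simp only [Finset.mem_Icc, not_and, not_le] at hd
          exact hd hd1
        have hdb : (N : ℝ) < (d : ℝ) ^ b := by
          have h1 : d ≤ d ^ b := Nat.le_self_pow (by omega) d
          have : (N : ℕ) < d ^ b := lt_of_lt_of_le hdN h1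
          exact_mod_cast this
        have := tail_bound b k hb hk hx hd1 hdb
        rw [Real.norm_eq_abs, abs_of_nonneg (by rw [ht]; positivity), mul_one_div]
        exact this
    calc |∑' d : {d : ℕ // d ∉ Finset.Icc 1 N}, t d|
        ≤ ∑' d : {d : ℕ // d ∉ Finset.Icc 1 N}, 2 * x ^ (k - 1) * (1 / ((d.1 : ℝ)) ^ 2) := by
          apply tsum_of_norm_bounded _ hb1
          exact ((hsum2.mul_left (2 * x ^ (k - 1))).subtype _).hasSum
    _ = 2 * x ^ (k - 1) * ∑' d : {d : ℕ // d ∉ Finset.Icc 1 N}, (1 / ((d.1 : ℝ)) ^ 2) := by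
          rw [tsum_mul_left]
    _ ≤ 2 * x ^ (k - 1) * K := by
          apply mul_le_mul_of_nonneg_left _ (by positivity)
          exact Summable.tsum_subtype_le (fun d : ℕ => 1 / (d:ℝ)^2) _ (fun d => by positivity) hsum2
  calc _ ≤ ((2 * k + 2) * x ^ (k - 1) * K) + (2 * x ^ (k - 1) * K) := add_le_add hpart1 hpart2
  _ = ((2 * k + 2) * K + 2 * K) * x ^ (k - 1) := by ring


theorem sum_ggcdk_asymptotic (b k : ℕ) (hb : 3 ≤ b) (hk : 2 ≤ k) :
    (fun x : ℝ =>
        (∑ n ∈ Fintype.piFinset (fun _ : Fin k => Finset.Icc 1 ⌊x⌋₊),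
          (ggcdk b k n : ℂ)) -
        riemannZeta ((b : ℂ) * k - 1) / riemannZeta ((b : ℂ) * k) * (x : ℂ) ^ k)
      =O[Filter.atTop] (fun x : ℝ => x ^ (k - 1)) := by
  obtain ⟨C, hC⟩ := analytic_est b k hb hk
  rw [Asymptotics.isBigO_iff]
  refine ⟨C, Filter.eventually_atTop.mpr ⟨2, fun x hx => ?_⟩⟩
  have hx0 : (0 : ℝ) < x := by linarith
  set N := ⌊x⌋₊ with hN
  set m := b * k with hm
  have hm3 : 3 ≤ m := by have := Nat.mul_le_mul hb hk; omega
  -- cast of b*k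
  have hbk : (b : ℂ) * (k : ℂ) = ((m : ℕ) : ℂ) := by rw [hm]; push_cast; ring
  -- combinatorial identity
  have hcomb := sum_ggcdk_eq b k N (by omega) (by omega)
  have hcast1 : (∑ n ∈ Fintype.piFinset (fun _ : Fin k => Finset.Icc 1 N),
      (ggcdk b k n : ℂ))
      = ((∑ d ∈ Finset.Icc 1 N, Nat.totient d * (N / d ^ b) ^ k : ℕ) : ℂ) := by
    rw [← hcomb]; push_cast; rfl
  -- zeta identity
  set T : ℝ := ∑' d : ℕ, (Nat.totient d : ℝ) / (d : ℝ) ^ m with hT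
  have hzeta : riemannZeta ((b : ℂ) * k - 1) / riemannZeta ((b : ℂ) * k) = (T : ℂ) := by
    rw [hbk, totient_lseries m hm3, hT, Complex.ofReal_tsum]
    congr 1; funext d; push_cast; ring
  rw [hcast1, hzeta]
  have hA : ((∑ d ∈ Finset.Icc 1 N, Nat.totient d * (N / d ^ b) ^ k : ℕ) : ℝ)
      = ∑ d ∈ Finset.Icc 1 N, (Nat.totient d : ℝ) * ((N / d ^ b : ℕ) : ℝ) ^ k := by
    push_cast; rfl
  have key : ((∑ d ∈ Finset.Icc 1 N, Nat.totient d * (N / d ^ b) ^ k : ℕ) : ℂ)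
      - (T : ℂ) * (x : ℂ) ^ k
      = ((((∑ d ∈ Finset.Icc 1 N, Nat.totient d * (N / d ^ b) ^ k : ℕ) : ℝ)
          - T * x ^ k : ℝ) : ℂ) := by
    push_cast; ring
  rw [key]
  rw [Complex.norm_real, Real.norm_eq_abs, Real.norm_eq_abs]
  have := hC x hx
  rw [hA]
  calc |(∑ d ∈ Finset.Icc 1 N, (Nat.totient d : ℝ) * ((N / d ^ b : ℕ) : ℝ) ^ k) - T * x ^ k|
      ≤ C * x ^ (k - 1) := this
  _ ≤ C * |x ^ (k - 1)| := by
      apply mul_le_mul_of_nonneg_left (le_abs_self _) ?_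
      by_contra hCneg
      push_neg at hCneg
      have h1 := hC x hx
      have h2 : (0:ℝ) < x ^ (k-1) := by positivity
      nlinarith [abs_nonneg ((∑ d ∈ Finset.Icc 1 N, (Nat.totient d : ℝ) * ((N / d ^ b : ℕ) : ℝ) ^ k) - T * x ^ k)]
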